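/- arXiv:1412.3281 — 3 statements merged into one kernel-verified Lean document; each statement's English description precedes it below -/
import Mathlib

section
/- For λ, α > 0 with λ^β < α, β ∈ (0,1], pt > 0, and n ∈ ℤ₊, the integral ∫_0^∞ p̄_β(n|z,λ) g(z|α,pt) dz equals ((-1)^n/n!)·(1/Γ(pt))·∑_{r=0}^∞ ((-λ^β/α)^r/r!)·(Γ(βr+1)Γ(r+pt)/Γ(βr+1-n)), where p̄_β(n|z,λ) = ((-1)^n/n!)∑_{k=0}^∞ ((-λ^β z)^k/k!)·Γ(βk+1)/Γ(βk+1-n) and g(z|α,pt) = (α^{pt}/Γ(pt)) z^{pt-1} e^{-αz}. -/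
open MeasureTheory Real Set Filter Topology

lemma myGammaRatio (x : ℝ) (hx : 0 ≤ x) (n : ℕ) :
    Real.Gamma (x + 1) / Real.Gamma (x + 1 - n) = ∏ j ∈ Finset.range n, (x - j) := by
  induction n with
  | zero => simp [div_self (Real.Gamma_pos_of_pos (by linarith : (0:ℝ) < x + 1)).ne']
  | succ n ih =>
    rw [Finset.prod_range_succ]
    by_cases hz : Real.Gamma (x + 1 - (n + 1 : ℕ)) = 0
    · rw [hz, div_zero]
      rcases (Real.Gamma_eq_zero_iff _).1 hz with ⟨m, hm⟩
      push_cast at hm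
      have hxn : x - n = -(m : ℝ) := by linarith
      rcases Nat.eq_zero_or_pos m with hm0 | hm0
      · subst hm0
        simp only [Nat.cast_zero, neg_zero] at hxn
        rw [hxn, mul_zero]
      · have hmn : m ≤ n := by
          by_contra hc
          have : (n : ℝ) < m := by exact_mod_cast Nat.lt_of_not_le hc
          nlinarith
        have hj : n - m ∈ Finset.range n := Finset.mem_range.2 (by omega)
        have hfac : x - ((n - m : ℕ) : ℝ) = 0 := by
          have : ((n - m : ℕ) : ℝ) = (n : ℝ) - m := by
            push_cast [Nat.cast_sub hmn]; ring
          rw [this]; linarith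
        rw [Finset.prod_eq_zero hj hfac, zero_mul]
    · have hxn : x - n ≠ 0 := by
        intro h0
        apply hz
        have : x + 1 - (n + 1 : ℕ) = 0 := by push_cast; linarith
        rw [this, Real.Gamma_zero]
      have hrec : Real.Gamma (x + 1 - n) = (x - n) * Real.Gamma (x + 1 - (n + 1 : ℕ)) := by
        have h1 := Real.Gamma_add_one hxn
        have e1 : x - n + 1 = x + 1 - n := by ring
        have e2 : x + 1 - (n + 1 : ℕ) = x - n := by push_cast; ring
        rw [e1] at h1
        rw [e2, h1]
      rw [← ih, eq_comm, hrec, mul_comm (x - (n:ℝ)), ← div_div, div_mul_cancel₀ _ hxn]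

lemma myTendsto (a b : ℝ) : Tendsto (fun r : ℕ => ((r : ℝ) + a) / ((r : ℝ) + b)) atTop (𝓝 1) := by
  have h1 : Tendsto (fun r : ℕ => (r : ℝ) + b) atTop atTop :=
    tendsto_atTop_add_const_right _ b tendsto_natCast_atTop_atTop
  have h2 : Tendsto (fun r : ℕ => (a - b) / ((r : ℝ) + b)) atTop (𝓝 0) :=
    Tendsto.div_atTop tendsto_const_nhds h1
  have h3 : Tendsto (fun r : ℕ => 1 + (a - b) / ((r : ℝ) + b)) atTop (𝓝 (1 + 0)) :=
    tendsto_const_nhds.add h2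
  rw [add_zero] at h3
  refine h3.congr' ?_
  filter_upwards [h1.eventually_gt_atTop 0] with r hr
  field_simp
  ring

lemma mySummable {ρ c : ℝ} (hρ0 : 0 < ρ) (hρ1 : ρ < 1) (hc : 0 < c) (n : ℕ) :
    Summable (fun r : ℕ =>
      ρ ^ r * Real.Gamma ((r : ℝ) + c) / (r.factorial : ℝ) * ((r : ℝ) + n + 1) ^ n) := by
  set f : ℕ → ℝ := fun r =>
    ρ ^ r * Real.Gamma ((r : ℝ) + c) / (r.factorial : ℝ) * ((r : ℝ) + n + 1) ^ n with hfdef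
  have hfpos : ∀ r, 0 < f r := by
    intro r
    have h1 : (0 : ℝ) < (r : ℝ) + c := by positivity
    have h2 := Real.Gamma_pos_of_pos h1
    have h3 : (0 : ℝ) < (r.factorial : ℝ) := by exact_mod_cast r.factorial_pos
    have h4 : (0 : ℝ) < ((r : ℝ) + n + 1) ^ n := by positivity
    positivity
  apply summable_of_ratio_test_tendsto_lt_one hρ1 (Eventually.of_forall fun r => (hfpos r).ne')
  have hratio : ∀ r : ℕ, ‖f (r + 1)‖ / ‖f r‖ =
      ρ * (((r : ℝ) + c) / ((r : ℝ) + 1)) * ((((r : ℝ) + 1 + n + 1) / ((r : ℝ) + n + 1)) ^ n) := by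
    intro r
    have hkey : f (r + 1) =
        (ρ * (((r : ℝ) + c) / ((r : ℝ) + 1)) * ((((r : ℝ) + 1 + n + 1) / ((r : ℝ) + n + 1)) ^ n))
          * f r := by
      have hG : Real.Gamma (((r + 1 : ℕ) : ℝ) + c) = ((r : ℝ) + c) * Real.Gamma ((r : ℝ) + c) := by
        have h0 : ((r : ℝ) + c) ≠ 0 := by positivity
        have := Real.Gamma_add_one h0
        rw [← this]
        push_cast
        ring_nf
      have hfac : ((r + 1).factorial : ℝ) = ((r : ℝ) + 1) * (r.factorial : ℝ) := by
        rw [Nat.factorial_succ]; push_cast; ring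
      have h3 : ((r.factorial : ℝ)) ≠ 0 := by exact_mod_cast r.factorial_pos.ne'
      have h4 : ((r : ℝ) + 1) ≠ 0 := by positivity
      have h5 : ((r : ℝ) + n + 1) ≠ 0 := by positivity
      simp only [hfdef]
      rw [hG, hfac]
      push_cast
      simp only [div_pow]
      field_simp
      ring
    have hrc : (0 : ℝ) < (r : ℝ) + c := add_pos_of_nonneg_of_pos (Nat.cast_nonneg r) hc
    have hA : (0 : ℝ) < ρ * (((r : ℝ) + c) / ((r : ℝ) + 1)) *
        ((((r : ℝ) + 1 + n + 1) / ((r : ℝ) + n + 1)) ^ n) :=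
      mul_pos (mul_pos hρ0 (div_pos hrc (by positivity)))
        (pow_pos (div_pos (by positivity) (by positivity)) n)
    rw [hkey, Real.norm_eq_abs, Real.norm_eq_abs, abs_mul, abs_of_pos (hfpos r),
      mul_div_assoc, div_self (hfpos r).ne', mul_one, abs_of_pos hA]
  simp only [hratio]
  have t1 : Tendsto (fun r : ℕ => ((r : ℝ) + c) / ((r : ℝ) + 1)) atTop (𝓝 1) := myTendsto c 1
  have t2 : Tendsto (fun r : ℕ => (((r : ℝ) + 1 + n + 1) / ((r : ℝ) + n + 1)) ^ n) atTop
      (𝓝 (1 ^ n)) := by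
    apply Tendsto.pow
    have := myTendsto ((n : ℝ) + 2) ((n : ℝ) + 1)
    refine this.congr fun r => ?_
    ring_nf
  have t0 : Tendsto (fun _ : ℕ => ρ) atTop (𝓝 ρ) := tendsto_const_nhds
  have t3 := (t0.mul t1).mul t2
  simp only [mul_one, one_pow] at t3
  exact t3

lemma myIntegrable {s b : ℝ} (hs : 0 < s) (hb : 0 < b) :
    IntegrableOn (fun z : ℝ => z ^ (s - 1) * Real.exp (-(b * z))) (Set.Ioi 0) := by
  have h0 := Real.GammaIntegral_convergent hs
  have h1 : IntegrableOn (fun z : ℝ => Real.exp (-(b * z)) * (b * z) ^ (s - 1)) (Set.Ioi 0) := by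
    have := (integrableOn_Ioi_comp_mul_left_iff
      (fun x : ℝ => Real.exp (-x) * x ^ (s - 1)) 0 hb).2
    simpa using this (by simpa using h0)
  have h2 : IntegrableOn (fun z : ℝ => b ^ (1 - s) * (Real.exp (-(b * z)) * (b * z) ^ (s - 1)))
      (Set.Ioi 0) := h1.const_mul (b ^ (1 - s))
  refine h2.congr_fun (fun z hz => ?_) measurableSet_Ioi
  have hz0 : (0 : ℝ) < z := hz
  have hbb : b ^ (1 - s) * b ^ (s - 1) = 1 := by
    rw [← Real.rpow_add hb]
    norm_num
  beta_reduce
  rw [Real.mul_rpow hb.le hz0.le]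
  linear_combination (Real.exp (-(b * z)) * z ^ (s - 1)) * hbb


/-- The one-dimensional distribution of the SFNB process:
∫_0^∞ p̄_β(n|z,λ) g(z|α,pt) dz = ((-1)^n/n!)(1/Γ(pt)) ∑_r ((-λ^β/α)^r/r!) Γ(βr+1)Γ(r+pt)/Γ(βr+1-n). -/
theorem sfnb_distribution (β lam α p t : ℝ) (hβ : β ∈ Set.Ioc (0 : ℝ) 1)
    (hlam : 0 < lam) (hα : 0 < α) (h : lam ^ β < α) (hpt : 0 < p * t) (n : ℕ) :
    (∫ z in Set.Ioi (0 : ℝ),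
        (((-1 : ℝ) ^ n / (Nat.factorial n : ℝ)) *
          ∑' k : ℕ, ((-(lam ^ β) * z) ^ k / (Nat.factorial k : ℝ)) *
            (Real.Gamma (β * k + 1) / Real.Gamma (β * k + 1 - n))) *
        (α ^ (p * t) / Real.Gamma (p * t) * z ^ (p * t - 1) * Real.exp (-α * z))) =
      ((-1 : ℝ) ^ n / (Nat.factorial n : ℝ)) * (1 / Real.Gamma (p * t)) *
        ∑' r : ℕ, ((-(lam ^ β / α)) ^ r / (Nat.factorial r : ℝ)) *
          (Real.Gamma (β * r + 1) * Real.Gamma (r + p * t) / Real.Gamma (β * r + 1 - n)) := by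
  obtain ⟨hb, hb1⟩ := hβ
  set c : ℝ := p * t with hcdef
  set q : ℝ := lam ^ β with hqdef
  have hq : 0 < q := Real.rpow_pos_of_pos hlam β
  set ρ : ℝ := q / α with hρdef
  have hρ0 : 0 < ρ := div_pos hq hα
  have hρ1 : ρ < 1 := (div_lt_one hα).2 h
  have hΓc : 0 < Real.Gamma c := Real.Gamma_pos_of_pos hpt
  set P : ℕ → ℝ := fun r => ∏ j ∈ Finset.range n, (β * r - j) with hPdef
  have hA : ∀ k : ℕ, Real.Gamma (β * k + 1) / Real.Gamma (β * k + 1 - n) = P k := by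
    intro k
    have := myGammaRatio (β * k) (by positivity) n
    simpa [hPdef] using this
  simp only [hA]
  simp only [mul_div_right_comm]
  simp only [hA]
  -- basic positivity facts
  have hrc : ∀ r : ℕ, (0 : ℝ) < (r : ℝ) + c := fun r =>
    add_pos_of_nonneg_of_pos (Nat.cast_nonneg r) hpt
  have hfact : ∀ r : ℕ, ((r.factorial : ℝ)) ≠ 0 := fun r => by
    exact_mod_cast r.factorial_pos.ne'
  -- the base function and its integral
  have hbase_eq : ∀ r : ℕ, ∀ z ∈ Set.Ioi (0:ℝ),
      z ^ r * (z ^ (c - 1) * Real.exp (-(α * z))) = z ^ ((r : ℝ) + c - 1) * Real.exp (-(α * z)) := by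
    intro r z hz
    rw [← mul_assoc, ← Real.rpow_natCast z r, ← Real.rpow_add hz, add_sub_assoc]
  have hbase_int : ∀ r : ℕ,
      IntegrableOn (fun z : ℝ => z ^ r * (z ^ (c - 1) * Real.exp (-(α * z)))) (Set.Ioi 0) := by
    intro r
    exact (myIntegrable (hrc r) hα).congr_fun (fun z hz => (hbase_eq r z hz).symm)
      measurableSet_Ioi
  have hbase_val : ∀ r : ℕ,
      ∫ z in Set.Ioi (0:ℝ), z ^ r * (z ^ (c - 1) * Real.exp (-(α * z))) =
        (1 / α) ^ ((r : ℝ) + c) * Real.Gamma ((r : ℝ) + c) := by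
    intro r
    rw [setIntegral_congr_fun measurableSet_Ioi (hbase_eq r)]
    exact Real.integral_rpow_mul_exp_neg_mul_Ioi (hrc r) hα
  -- the summand functions
  have hfr : ∀ r : ℕ,
      (fun z : ℝ => (-q * z) ^ r / (r.factorial : ℝ) * P r *
        (α ^ c / Real.Gamma c * z ^ (c - 1) * Real.exp (-α * z))) =
      (fun z : ℝ => ((-q) ^ r / (r.factorial : ℝ) * P r * (α ^ c / Real.Gamma c)) *
        (z ^ r * (z ^ (c - 1) * Real.exp (-(α * z))))) := by
    intro r
    funext z
    rw [neg_mul α z, mul_pow]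
    ring
  have hInt : ∀ r : ℕ,
      Integrable (fun z : ℝ => (-q * z) ^ r / (r.factorial : ℝ) * P r *
        (α ^ c / Real.Gamma c * z ^ (c - 1) * Real.exp (-α * z)))
        (volume.restrict (Set.Ioi 0)) := by
    intro r
    have := (hbase_int r).const_mul ((-q) ^ r / (r.factorial : ℝ) * P r * (α ^ c / Real.Gamma c))
    rwa [← hfr r] at this
  have hval : ∀ r : ℕ,
      ∫ z in Set.Ioi (0:ℝ), (-q * z) ^ r / (r.factorial : ℝ) * P r *
        (α ^ c / Real.Gamma c * z ^ (c - 1) * Real.exp (-α * z)) =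
      ((-q) ^ r / (r.factorial : ℝ) * P r * (α ^ c / Real.Gamma c)) *
        ((1 / α) ^ ((r : ℝ) + c) * Real.Gamma ((r : ℝ) + c)) := by
    intro r
    rw [hfr r, integral_const_mul, hbase_val r]
  have hsplit : ∀ r : ℕ, ((1:ℝ) / α) ^ ((r : ℝ) + c) = (1 / α) ^ r * (1 / α) ^ c := by
    intro r
    rw [Real.rpow_add (by positivity), Real.rpow_natCast]
  have hPle : ∀ r : ℕ, |P r| ≤ ((r : ℝ) + n + 1) ^ n := by
    intro r
    rw [hPdef]
    simp only
    rw [Finset.abs_prod]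
    have hbd : ∀ j ∈ Finset.range n, |β * (r:ℝ) - (j:ℝ)| ≤ (r : ℝ) + n + 1 := by
      intro j hj
      have h1 : β * (r:ℝ) ≤ (r:ℝ) := by nlinarith [Nat.cast_nonneg (α := ℝ) r]
      have h2 : (j : ℝ) < n := by exact_mod_cast Finset.mem_range.1 hj
      have h3 : |β * (r:ℝ) - (j:ℝ)| ≤ |β * (r:ℝ)| + |(j:ℝ)| := abs_sub _ _
      rw [abs_of_nonneg (mul_nonneg hb.le (Nat.cast_nonneg r)), abs_of_nonneg (Nat.cast_nonneg (α := ℝ) j)] at h3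
      linarith
    calc ∏ j ∈ Finset.range n, |β * (r:ℝ) - (j:ℝ)|
        ≤ ∏ j ∈ Finset.range n, ((r : ℝ) + n + 1) :=
          Finset.prod_le_prod (fun j _ => abs_nonneg _) hbd
      _ = ((r : ℝ) + n + 1) ^ n := by rw [Finset.prod_const, Finset.card_range]
  have hnorm : ∀ r : ℕ,
      ∫ z in Set.Ioi (0:ℝ), ‖(-q * z) ^ r / (r.factorial : ℝ) * P r *
        (α ^ c / Real.Gamma c * z ^ (c - 1) * Real.exp (-α * z))‖ =
      |(-q) ^ r / (r.factorial : ℝ) * P r * (α ^ c / Real.Gamma c)| *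
        ((1 / α) ^ ((r : ℝ) + c) * Real.Gamma ((r : ℝ) + c)) := by
    intro r
    have heq : ∀ z ∈ Set.Ioi (0:ℝ),
        ‖(-q * z) ^ r / (r.factorial : ℝ) * P r *
          (α ^ c / Real.Gamma c * z ^ (c - 1) * Real.exp (-α * z))‖ =
        |(-q) ^ r / (r.factorial : ℝ) * P r * (α ^ c / Real.Gamma c)| *
          (z ^ r * (z ^ (c - 1) * Real.exp (-(α * z)))) := by
      intro z hz
      have hz0 : (0:ℝ) < z := hz
      have hb0 : 0 ≤ z ^ r * (z ^ (c - 1) * Real.exp (-(α * z))) :=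
        mul_nonneg (pow_nonneg hz0.le r)
          (mul_nonneg (Real.rpow_nonneg hz0.le _) (Real.exp_pos _).le)
      rw [Real.norm_eq_abs, congrFun (hfr r) z, abs_mul, abs_of_nonneg hb0]
    rw [setIntegral_congr_fun measurableSet_Ioi heq, integral_const_mul, hbase_val r]
  have hqρ : ∀ r : ℕ, q ^ r * (1 / α) ^ r = ρ ^ r := by
    intro r
    rw [← mul_pow, mul_one_div, hρdef]
  have habs : ∀ r : ℕ, |(-q) ^ r / (r.factorial : ℝ) * P r * (α ^ c / Real.Gamma c)| =
      q ^ r / (r.factorial : ℝ) * |P r| * (α ^ c / Real.Gamma c) := by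
    intro r
    rw [abs_mul, abs_mul, abs_div, abs_pow, abs_neg, abs_of_pos hq,
      abs_of_nonneg (Nat.cast_nonneg _),
      abs_of_pos (div_pos (Real.rpow_pos_of_pos hα c) hΓc)]
  have hSum : Summable (fun r : ℕ => ∫ z in Set.Ioi (0:ℝ), ‖(-q * z) ^ r / (r.factorial : ℝ) * P r *
      (α ^ c / Real.Gamma c * z ^ (c - 1) * Real.exp (-α * z))‖) := by
    have hS := (mySummable hρ0 hρ1 hpt n).mul_left (α ^ c / Real.Gamma c * (1 / α) ^ c)
    apply Summable.of_nonneg_of_le ?_ ?_ hS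
    · intro r
      rw [hnorm r]
      exact mul_nonneg (abs_nonneg _)
        (mul_nonneg (Real.rpow_nonneg (by positivity) _) (Real.Gamma_pos_of_pos (hrc r)).le)
    · intro r
      rw [hnorm r, habs r, hsplit r]
      have key : q ^ r / (r.factorial : ℝ) * |P r| * (α ^ c / Real.Gamma c) *
          ((1 / α) ^ r * (1 / α) ^ c * Real.Gamma ((r : ℝ) + c)) =
          α ^ c / Real.Gamma c * (1 / α) ^ c *
            (ρ ^ r * Real.Gamma ((r : ℝ) + c) / (r.factorial : ℝ) * |P r|) := by
        rw [← hqρ r]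
        ring
      rw [key]
      apply mul_le_mul_of_nonneg_left
      · apply mul_le_mul_of_nonneg_left (hPle r)
        have := (Real.Gamma_pos_of_pos (hrc r)).le
        positivity
      · positivity
  -- swap integral and sum
  have hswap := integral_tsum_of_summable_integral_norm hInt hSum
  have hαc : α ^ c * (1 / α) ^ c = 1 := by
    rw [← Real.mul_rpow hα.le (by positivity), mul_one_div_cancel hα.ne', Real.one_rpow]
  have hterm : ∀ r : ℕ,
      (-q) ^ r / (r.factorial : ℝ) * P r * (α ^ c / Real.Gamma c) *
        ((1 / α) ^ ((r : ℝ) + c) * Real.Gamma ((r : ℝ) + c)) =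
      1 / Real.Gamma c * ((-ρ) ^ r / (r.factorial : ℝ) * (P r * Real.Gamma ((r : ℝ) + c))) := by
    intro r
    have hnegpow : ((1:ℝ) / α) ^ r * (-q) ^ r = (-ρ) ^ r := by
      rw [← mul_pow]
      congr 1
      rw [hρdef]
      ring
    rw [hsplit r]
    linear_combination
      (P r * Real.Gamma ((r:ℝ) + c) * ((1/α) ^ r * (-q) ^ r) /
        ((r.factorial : ℝ) * Real.Gamma c)) * hαc +
      (P r * Real.Gamma ((r:ℝ) + c) / ((r.factorial : ℝ) * Real.Gamma c)) * hnegpow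
  have hfinal : ∀ z : ℝ,
      ((-1:ℝ) ^ n / (n.factorial : ℝ) * ∑' k : ℕ, (-q * z) ^ k / (k.factorial : ℝ) * P k) *
        (α ^ c / Real.Gamma c * z ^ (c - 1) * Real.exp (-α * z)) =
      (-1:ℝ) ^ n / (n.factorial : ℝ) * ∑' k : ℕ, (-q * z) ^ k / (k.factorial : ℝ) * P k *
        (α ^ c / Real.Gamma c * z ^ (c - 1) * Real.exp (-α * z)) := by
    intro z
    rw [mul_assoc, ← tsum_mul_right]
  simp only [hfinal]
  rw [integral_const_mul, ← hswap]
  have hts : ∑' r : ℕ, (∫ z in Set.Ioi (0:ℝ), (-q * z) ^ r / (r.factorial : ℝ) * P r *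
      (α ^ c / Real.Gamma c * z ^ (c - 1) * Real.exp (-α * z))) =
      1 / Real.Gamma c * ∑' r : ℕ, (-ρ) ^ r / (r.factorial : ℝ) * (P r * Real.Gamma ((r : ℝ) + c)) := by
    rw [← tsum_mul_left]
    exact tsum_congr fun r => (hval r).trans (hterm r)
  rw [hts, ← mul_assoc]
end

section
/- For β = 1, λ, α > 0 with λ/α < 1, pt > 0 and n ∈ ℤ₊, the sum ((-1)^n/n!)·(1/Γ(pt))·∑_{j=n}^∞ (-λ/α)^j·Γ(j+pt)/(j-n)! equals (λ/(α+λ))^n·(α/(α+λ))^{pt}·C(n+pt-1, n), i.e., the NB(pt, λ/(α+λ)) probability mass at n. -/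
open MeasureTheory Set Filter Real Topology

lemma aux_summable {s x : ℝ} (hs : 0 < s) (hx0 : 0 < x) (hx : x < 1) :
    Summable (fun k : ℕ => x ^ k * Real.Gamma (k + s) / (Nat.factorial k : ℝ)) := by
  set f : ℕ → ℝ := fun k => x ^ k * Real.Gamma (k + s) / (Nat.factorial k : ℝ) with hf
  have hΓ : ∀ k : ℕ, 0 < Real.Gamma ((k : ℝ) + s) := fun k =>
    Real.Gamma_pos_of_pos (by positivity)
  have hfpos : ∀ k, 0 < f k := fun k => by
    have := hΓ k
    have : (0:ℝ) < (Nat.factorial k : ℝ) := by positivity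
    positivity
  apply summable_of_ratio_test_tendsto_lt_one hx
  · exact Eventually.of_forall (fun k => (hfpos k).ne')
  · have heq : (fun k : ℕ => ‖f (k + 1)‖ / ‖f k‖)
        = fun k : ℕ => x * (1 + (s - 1) / ((k : ℝ) + 1)) := by
      funext k
      have hΓ1 : Real.Gamma ((↑(k+1) : ℝ) + s) = ((k:ℝ) + s) * Real.Gamma ((k:ℝ) + s) := by
        have h1 : ((↑(k+1) : ℝ) + s) = ((k:ℝ) + s) + 1 := by push_cast; ring
        rw [h1, Real.Gamma_add_one (by positivity)]
      have hk1 : (0:ℝ) < (k:ℝ) + 1 := by positivity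
      have hkf : (0:ℝ) < (Nat.factorial k : ℝ) := by positivity
      rw [Real.norm_of_nonneg (hfpos _).le, Real.norm_of_nonneg (hfpos _).le]
      simp only [hf, Nat.factorial_succ, pow_succ]
      rw [hΓ1]
      push_cast
      field_simp
      ring
    rw [heq]
    have h0 : Tendsto (fun k : ℕ => (s - 1) / ((k : ℝ) + 1)) atTop (𝓝 0) := by
      have := (tendsto_const_div_atTop_nhds_zero_nat (s - 1)).comp (tendsto_add_atTop_nat 1)
      refine this.congr fun k => ?_
      simp only [Function.comp]
      push_cast
      ring
    have := ((tendsto_const_nhds (x := (1:ℝ))).add h0).const_mul x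
    simpa using this

lemma gamma_binom {s x : ℝ} (hs : 0 < s) (hx0 : 0 < x) (hx : x < 1) :
    ∑' k : ℕ, (-x) ^ k * Real.Gamma (k + s) / (Nat.factorial k : ℝ)
      = (1 / (1 + x)) ^ s * Real.Gamma s := by
  set F : ℕ → ℝ → ℝ := fun k t =>
    ((-x) ^ k / (Nat.factorial k : ℝ)) * (Real.exp (-t) * t ^ ((k:ℝ) + s - 1)) with hF
  have hks : ∀ k : ℕ, (0:ℝ) < (k:ℝ) + s := fun k => by positivity
  have hF_int : ∀ k : ℕ, Integrable (F k) (volume.restrict (Ioi 0)) := fun k =>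
    ((Real.GammaIntegral_convergent (hks k)).const_mul _)
  have hnorm : ∀ k : ℕ, ∫ t in Ioi (0:ℝ), ‖F k t‖
      = x ^ k * Real.Gamma ((k:ℝ) + s) / (Nat.factorial k : ℝ) := by
    intro k
    have : ∫ t in Ioi (0:ℝ), ‖F k t‖
        = ∫ t in Ioi (0:ℝ), (x ^ k / (Nat.factorial k : ℝ)) *
            (Real.exp (-t) * t ^ ((k:ℝ) + s - 1)) := by
      refine setIntegral_congr_fun measurableSet_Ioi (fun t ht => ?_)
      have ht0 : (0:ℝ) < t := ht
      have h1 : (0:ℝ) ≤ Real.exp (-t) * t ^ ((k:ℝ) + s - 1) := by positivity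
      rw [hF]
      simp only [norm_mul, Real.norm_of_nonneg h1, norm_div, norm_pow, norm_neg,
        Real.norm_of_nonneg hx0.le, Real.norm_natCast]
    rw [this, integral_const_mul, ← Real.Gamma_eq_integral (hks k)]
    ring
  have hF_sum : Summable (fun k : ℕ => ∫ t in Ioi (0:ℝ), ‖F k t‖) := by
    rw [show (fun k : ℕ => ∫ t in Ioi (0:ℝ), ‖F k t‖)
        = fun k : ℕ => x ^ k * Real.Gamma ((k:ℝ) + s) / (Nat.factorial k : ℝ) from
        funext hnorm]
    exact aux_summable hs hx0 hx
  have key := MeasureTheory.integral_tsum_of_summable_integral_norm hF_int hF_sum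
  have hterm : ∀ k : ℕ, ∫ t in Ioi (0:ℝ), F k t
      = (-x) ^ k * Real.Gamma (k + s) / (Nat.factorial k : ℝ) := by
    intro k
    rw [hF]
    simp only
    rw [integral_const_mul, ← Real.Gamma_eq_integral (hks k)]
    ring
  have hsum_eval : ∀ t ∈ Ioi (0:ℝ), (∑' k : ℕ, F k t)
      = t ^ (s - 1) * Real.exp (-((1 + x) * t)) := by
    intro t ht
    have ht0 : (0:ℝ) < t := ht
    have hrw : ∀ k : ℕ, F k t
        = (Real.exp (-t) * t ^ (s - 1)) * ((-(x * t)) ^ k / (Nat.factorial k : ℝ)) := by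
      intro k
      have : t ^ ((k:ℝ) + s - 1) = t ^ (k:ℕ) * t ^ (s - 1) := by
        rw [show (k:ℝ) + s - 1 = (k:ℝ) + (s - 1) by ring, Real.rpow_add ht0,
          Real.rpow_natCast]
      rw [hF]
      simp only [this]
      rw [show -(x*t) = (-x)*t by ring, mul_pow]
      ring
    rw [tsum_congr hrw, tsum_mul_left]
    have hexp : (∑' k : ℕ, (-(x * t)) ^ k / (Nat.factorial k : ℝ)) = Real.exp (-(x * t)) := by
      rw [Real.exp_eq_exp_ℝ, NormedSpace.exp_eq_tsum_div]
    rw [hexp, show -((1+x)*t) = -t + -(x*t) by ring, Real.exp_add]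
    ring
  calc ∑' k : ℕ, (-x) ^ k * Real.Gamma (k + s) / (Nat.factorial k : ℝ)
      = ∑' k : ℕ, ∫ t in Ioi (0:ℝ), F k t := by
        exact (tsum_congr hterm).symm
    _ = ∫ t in Ioi (0:ℝ), (∑' k : ℕ, F k t) := key
    _ = ∫ t in Ioi (0:ℝ), t ^ (s - 1) * Real.exp (-((1 + x) * t)) :=
        setIntegral_congr_fun measurableSet_Ioi hsum_eval
    _ = (1 / (1 + x)) ^ s * Real.Gamma s :=
        Real.integral_rpow_mul_exp_neg_mul_Ioi hs (by linarith)

/-- For β = 1 the SFNB distribution reduces to the NB(pt, λ/(α+λ)) pmf. -/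
theorem sfnb_reduces_to_nb (lam α p t : ℝ) (hlam : 0 < lam) (hα : 0 < α)
    (h : lam / α < 1) (hpt : 0 < p * t) (n : ℕ) :
    ((-1 : ℝ) ^ n / (Nat.factorial n : ℝ)) * (1 / Real.Gamma (p * t)) *
        (∑' j : ℕ, if n ≤ j then
          (-(lam / α)) ^ j * Real.Gamma (j + p * t) / (Nat.factorial (j - n) : ℝ) else 0) =
      (lam / (α + lam)) ^ n * (α / (α + lam)) ^ (p * t) *
        (Real.Gamma (n + p * t) / (Real.Gamma (p * t) * (Nat.factorial n : ℝ))) := by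
  set x : ℝ := lam / α with hxdef
  have hx0 : 0 < x := div_pos hlam hα
  set g : ℕ → ℝ := fun j => if n ≤ j then
      (-x) ^ j * Real.Gamma (j + p * t) / (Nat.factorial (j - n) : ℝ) else 0 with hg
  -- reindex the sum
  have hinj : Function.Injective (fun k : ℕ => n + k) := fun a b hab => by simpa using hab
  have hsupp : Function.support g ⊆ Set.range (fun k : ℕ => n + k) := by
    intro j hj
    rw [Function.mem_support, hg] at hj
    by_cases hnj : n ≤ j
    · exact ⟨j - n, by show n + (j - n) = j; omega⟩
    · simp [hnj] at hj
  have hre : (∑' j : ℕ, g j) = ∑' k : ℕ, g (n + k) := (hinj.tsum_eq hsupp).symm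
  have hgk : ∀ k : ℕ, g (n + k)
      = (-x) ^ n * ((-x) ^ k * Real.Gamma ((k:ℝ) + ((n:ℝ) + p * t)) / (Nat.factorial k : ℝ)) := by
    intro k
    rw [hg]
    simp only [Nat.le_add_right, if_true, Nat.add_sub_cancel_left]
    rw [pow_add]
    push_cast
    ring_nf
  have hs : 0 < (n:ℝ) + p * t := by positivity
  have hbin := gamma_binom (s := (n:ℝ) + p * t) hs hx0 h
  have hsum : (∑' j : ℕ, g j)
      = (-x) ^ n * ((1 / (1 + x)) ^ ((n:ℝ) + p * t) * Real.Gamma ((n:ℝ) + p * t)) := by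
    rw [hre, tsum_congr hgk, tsum_mul_left, hbin]
  rw [hsum]
  have hαl : 0 < α + lam := by linarith
  have h1x : 1 + x = (α + lam) / α := by
    field_simp [hxdef]; rw [add_mul, hxdef, div_mul_cancel₀ lam hα.ne']; ring
  have h1x' : 1 / (1 + x) = α / (α + lam) := by rw [h1x]; field_simp
  have hrpow : (1 / (1 + x)) ^ ((n:ℝ) + p * t)
      = (α / (α + lam)) ^ (n:ℕ) * (α / (α + lam)) ^ (p * t) := by
    rw [h1x', Real.rpow_add (by positivity), Real.rpow_natCast]
  rw [hrpow]
  have hne : Real.Gamma (p * t) ≠ 0 := (Real.Gamma_pos_of_pos hpt).ne'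
  have hfn : (Nat.factorial n : ℝ) ≠ 0 := by positivity
  have hpow : ((-1:ℝ)) ^ n * (-x) ^ n * α ^ n = lam ^ n := by
    rw [← mul_pow, ← mul_pow]
    congr 1
    field_simp [hxdef]
    rw [hxdef, div_mul_cancel₀ lam hα.ne']
  rw [div_pow, div_pow, ← hpow]
  ring
end

section
/- Let d ≥ 1 and λ₁,…,λ_d > 0 with s(λ) = ∑_j λ_j, and let N¹,…,N^d be independent Poisson processes with rates λ_j, subordinated by a common independent Gamma process Y(t) ~ G(α, t). Then for n₁,…,n_d ∈ ℤ₊ with s(n) = ∑ n_j, P(N¹(Y(t)) = n₁, …, N^d(Y(t)) = n_d) = (α^t · s(n)! / (α + s(λ))^{s(n)+t}) · C(s(n)+t-1, t-1) · ∏_{i=1}^d λ_i^{n_i}/n_i!. -/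
open scoped BigOperators

/-- Joint distribution of d independent Poisson processes subordinated by a
common Gamma(α, t) subordinator, computed as the mixing integral:
∫_0^∞ ∏_i [(λ_i y)^{n_i} e^{-λ_i y}/n_i!]·(α^t/Γ(t)) y^{t-1} e^{-αy} dy
= (α^t s(n)!/(α+s(λ))^{s(n)+t})·C(s(n)+t-1,t-1)·∏_i λ_i^{n_i}/n_i!. -/
theorem multivariate_nb_joint_distribution (d : ℕ) (hd : 1 ≤ d)
    (lam : Fin d → ℝ) (hlam : ∀ i, 0 < lam i) (α t : ℝ) (hα : 0 < α) (ht : 0 < t)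
    (n : Fin d → ℕ) :
    (∫ y in Set.Ioi (0 : ℝ),
        (∏ i, (lam i * y) ^ (n i) * Real.exp (-(lam i) * y) / (Nat.factorial (n i) : ℝ)) *
          (α ^ t / Real.Gamma t * y ^ (t - 1) * Real.exp (-α * y))) =
      α ^ t * (Nat.factorial (∑ i, n i) : ℝ) / (α + ∑ i, lam i) ^ ((∑ i, n i : ℕ) + t) *
        (Real.Gamma ((∑ i, n i : ℕ) + t) /
          (Real.Gamma t * (Nat.factorial (∑ i, n i) : ℝ))) *
        ∏ i, (lam i) ^ (n i) / (Nat.factorial (n i) : ℝ) := by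
  have : Nonempty (Fin d) := ⟨⟨0, hd⟩⟩
  set Λ : ℝ := ∑ i, lam i with hΛdef
  have hΛ : 0 < Λ := Finset.sum_pos (fun i _ => hlam i) Finset.univ_nonempty
  set s : ℕ := ∑ i, n i with hsdef
  have hr : 0 < α + Λ := by linarith
  have hst : 0 < (s : ℝ) + t := by positivity
  set c : ℝ := (∏ i, (lam i) ^ (n i) / (Nat.factorial (n i) : ℝ)) * (α ^ t / Real.Gamma t)
    with hcdef
  have key : ∫ y in Set.Ioi (0 : ℝ),
      (∏ i, (lam i * y) ^ (n i) * Real.exp (-(lam i) * y) / (Nat.factorial (n i) : ℝ)) *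
        (α ^ t / Real.Gamma t * y ^ (t - 1) * Real.exp (-α * y))
      = ∫ y in Set.Ioi (0 : ℝ),
        c * (y ^ (((s : ℝ) + t) - 1) * Real.exp (-((α + Λ) * y))) := by
    refine MeasureTheory.setIntegral_congr_fun measurableSet_Ioi (fun y hy => ?_)
    have hy0 : (0 : ℝ) < y := hy
    have hpt : ∀ i : Fin d, (lam i * y) ^ (n i) * Real.exp (-(lam i) * y) /
        (Nat.factorial (n i) : ℝ)
        = ((lam i) ^ (n i) / (Nat.factorial (n i) : ℝ)) *
          (y ^ (n i) * Real.exp (-(lam i * y))) := by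
      intro i; rw [mul_pow, neg_mul]; ring
    have hsum : ∑ i, -(lam i * y) = -(Λ * y) := by
      rw [hΛdef, Finset.sum_mul, ← Finset.sum_neg_distrib]
    have h1 : (∏ i, (lam i * y) ^ (n i) * Real.exp (-(lam i) * y) / (Nat.factorial (n i) : ℝ))
        = (∏ i, (lam i) ^ (n i) / (Nat.factorial (n i) : ℝ)) *
          (y ^ s * Real.exp (-(Λ * y))) := by
      rw [Finset.prod_congr rfl (fun i _ => hpt i), Finset.prod_mul_distrib,
        Finset.prod_mul_distrib, Finset.prod_pow_eq_pow_sum, ← Real.exp_sum, hsum, ← hsdef]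
    rw [h1]
    have h2 : (y : ℝ) ^ s * y ^ (t - 1) = y ^ (((s : ℝ) + t) - 1) := by
      rw [← Real.rpow_natCast y s, ← Real.rpow_add hy0]
      ring_nf
    have h3 : Real.exp (-(Λ * y)) * Real.exp (-α * y) = Real.exp (-((α + Λ) * y)) := by
      rw [← Real.exp_add]; ring_nf
    calc (∏ i, (lam i) ^ (n i) / (Nat.factorial (n i) : ℝ)) * (y ^ s * Real.exp (-(Λ * y))) *
          (α ^ t / Real.Gamma t * y ^ (t - 1) * Real.exp (-α * y))
        = c * ((y ^ s * y ^ (t - 1)) * (Real.exp (-(Λ * y)) * Real.exp (-α * y))) := by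
          rw [hcdef]; ring
      _ = c * (y ^ (((s : ℝ) + t) - 1) * Real.exp (-((α + Λ) * y))) := by rw [h2, h3]
  rw [key, MeasureTheory.integral_const_mul,
    Real.integral_rpow_mul_exp_neg_mul_Ioi hst hr, hcdef]
  have h4 : (1 / (α + Λ)) ^ ((s : ℝ) + t) = 1 / (α + Λ) ^ ((s : ℝ) + t) := by
    rw [Real.div_rpow zero_le_one hr.le, Real.one_rpow]
  rw [h4]
  have hG : 0 < Real.Gamma t := Real.Gamma_pos_of_pos ht
  have hrp : 0 < (α + Λ) ^ ((s : ℝ) + t) := Real.rpow_pos_of_pos hr _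
  have hfac : (0 : ℝ) < (Nat.factorial s : ℝ) := by positivity
  field_simp
end
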